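/- An assignment φ(X_{ij}) = Σ_{h=1}^{l_i} a^i_{jh} X_{ih} + ψ_{ij}(X_1,…,X_{i-1}), where for all i,j the ψ_{ij} are homogeneous polynomials of weighted degree q_i in R_{[i-1]} and each matrix A_i = (a^i_{jh})_{j,h=1,…,l_i} ∈ M_{l_i}(K) is invertible, defines a graded K-algebra automorphism of R. Conversely, every graded K-algebra automorphism of R is of this form. -/

import Mathlib

open MvPolynomial

section Aux

variable {K : Type*} [Field K] {N : ℕ} {w : Fin N → ℕ}

lemma weight_single_one (s : Fin N) :
    Finsupp.weight w (Finsupp.single s 1) = w s := by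
  simp [Finsupp.weight_apply, Finsupp.sum_single_index]

lemma pow_homog {p : MvPolynomial (Fin N) K} {m : ℕ} (hp : p.IsWeightedHomogeneous w m)
    (k : ℕ) : (p ^ k).IsWeightedHomogeneous w (k * m) := by
  induction k with
  | zero => simpa using isWeightedHomogeneous_one _ _
  | succ k ih =>
      have := ih.mul hp
      rw [pow_succ, add_one_mul]
      exact this

/-- `aeval` at weighted-homogeneous generator images preserves the grading. -/
lemma aeval_homog (g : Fin N → MvPolynomial (Fin N) K)
    (hg : ∀ t, (g t).IsWeightedHomogeneous w (w t)) {d : ℕ} {f : MvPolynomial (Fin N) K}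
    (hf : f.IsWeightedHomogeneous w d) :
    (aeval g f).IsWeightedHomogeneous w d := by
  classical
  conv_lhs => rw [f.as_sum]
  rw [map_sum]
  apply IsWeightedHomogeneous.sum
  intro e he
  rw [aeval_monomial]
  have h1 : (∏ s ∈ e.support, g s ^ e s).IsWeightedHomogeneous w
      (∑ s ∈ e.support, e s * w s) :=
    IsWeightedHomogeneous.prod _ _ _ fun s _ => pow_homog (hg s) (e s)
  have h2 : (∑ s ∈ e.support, e s * w s) = d := by
    have := hf (Finsupp.mem_support_iff.mp he)
    rw [← this, Finsupp.weight_apply, Finsupp.sum]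
    simp [smul_eq_mul]
  have h3 : ((algebraMap K (MvPolynomial (Fin N) K)) (coeff e f)).IsWeightedHomogeneous w 0 :=
    isWeightedHomogeneous_C _ _
  have h4 := h3.mul h1
  rw [zero_add, h2] at h4
  rwa [Finsupp.prod] 

/-- Component extraction: a grading-preserving algebra map commutes with homogeneous components. -/
lemma comp_extract (φ : MvPolynomial (Fin N) K →ₐ[K] MvPolynomial (Fin N) K)
    (hφ : ∀ (d : ℕ) (f : MvPolynomial (Fin N) K),
      f.IsWeightedHomogeneous w d → (φ f).IsWeightedHomogeneous w d)
    (f : MvPolynomial (Fin N) K) (d : ℕ) :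
    weightedHomogeneousComponent w d (φ f) = φ (weightedHomogeneousComponent w d f) := by
  classical
  have hfin : (Function.support fun m => weightedHomogeneousComponent w m f).Finite :=
    weightedHomogeneousComponent_finsupp f
  have h1 : φ f = ∑ᶠ m, φ (weightedHomogeneousComponent w m f) := by
    conv_lhs => rw [← finsum_weightedHomogeneousComponent w (φ := f)]
    exact (AddMonoidHom.map_finsum φ.toAddMonoidHom hfin)
  rw [h1]
  have h2 : weightedHomogeneousComponent w d (∑ᶠ m, φ (weightedHomogeneousComponent w m f)) =
      ∑ᶠ m, weightedHomogeneousComponent w d (φ (weightedHomogeneousComponent w m f)) :=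
    AddMonoidHom.map_finsum (weightedHomogeneousComponent w d).toAddMonoidHom
      (hfin.subset (by intro m hm; simp only [Function.mem_support] at hm ⊢
                       intro h0; apply hm; rw [h0, map_zero]))
  rw [h2]
  have h3 : ∀ m, m ≠ d →
      weightedHomogeneousComponent w d (φ (weightedHomogeneousComponent w m f)) = 0 := by
    intro m hm
    exact (hφ m _ (weightedHomogeneousComponent_isWeightedHomogeneous m f)).weightedHomogeneousComponent_ne d (fun h => hm h.symm)
  rw [finsum_eq_single _ d (fun m hm => h3 m hm)]
  exact (hφ d _ (weightedHomogeneousComponent_isWeightedHomogeneous d f)).weightedHomogeneousComponent_same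

lemma homog_submodule_fd (hpos : ∀ k, 0 < w k) (d : ℕ) :
    FiniteDimensional K (weightedHomogeneousSubmodule K w d) := by
  have hle : weightedHomogeneousSubmodule K w d ≤ restrictTotalDegree (Fin N) K d := by
    intro p hp
    rw [mem_restrictTotalDegree]
    rw [mem_weightedHomogeneousSubmodule] at hp
    apply Finset.sup_le
    intro e he
    have hw : Finsupp.weight w e = d := hp (Finsupp.mem_support_iff.mp he)
    calc (e.sum fun _ n => n) ≤ e.sum fun s n => n * w s := by
          apply Finset.sum_le_sum
          intro s _
          exact Nat.le_mul_of_pos_right _ (hpos s)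
      _ = d := by rw [← hw, Finsupp.weight_apply]; rfl
  exact Submodule.finiteDimensional_of_le hle

/-- A surjective grading-preserving algebra endomorphism is injective. -/
lemma inj_of_surj (hpos : ∀ k, 0 < w k)
    (φ : MvPolynomial (Fin N) K →ₐ[K] MvPolynomial (Fin N) K)
    (hφ : ∀ (d : ℕ) (f : MvPolynomial (Fin N) K),
      f.IsWeightedHomogeneous w d → (φ f).IsWeightedHomogeneous w d)
    (hs : Function.Surjective φ) : Function.Injective φ := by
  classical
  have hmap : ∀ d : ℕ, ∀ x ∈ weightedHomogeneousSubmodule K w d,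
      φ x ∈ weightedHomogeneousSubmodule K w d := fun d x hx => hφ d x hx
  -- the restricted maps
  have key : ∀ (d : ℕ) (x : MvPolynomial (Fin N) K), x.IsWeightedHomogeneous w d →
      φ x = 0 → x = 0 := by
    intro d
    haveI := homog_submodule_fd (K := K) hpos d
    set V := weightedHomogeneousSubmodule K w d
    let φd : V →ₗ[K] V := φ.toLinearMap.restrict (hmap d)
    have hsurj : Function.Surjective φd := by
      intro g
      obtain ⟨f, hf⟩ := hs (g : MvPolynomial (Fin N) K)
      refine ⟨⟨weightedHomogeneousComponent w d f, weightedHomogeneousComponent_mem w f d⟩, ?_⟩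
      apply Subtype.ext
      show φ (weightedHomogeneousComponent w d f) = (g : MvPolynomial (Fin N) K)
      rw [← comp_extract φ hφ, hf]
      exact IsWeightedHomogeneous.weightedHomogeneousComponent_same g.2
    have hinj : Function.Injective φd := (LinearMap.injective_iff_surjective).mpr hsurj
    intro x hx hx0
    have h0 : φd ⟨x, hx⟩ = φd 0 := by rw [map_zero]; exact Subtype.ext hx0
    exact congrArg Subtype.val (hinj h0)
  intro f g hfg
  rw [← sub_eq_zero] at hfg ⊢
  rw [← map_sub] at hfg
  set p := f - g
  rw [← finsum_weightedHomogeneousComponent w (φ := p)]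
  have : ∀ d, weightedHomogeneousComponent w d p = 0 := by
    intro d
    apply key d _ (weightedHomogeneousComponent_isWeightedHomogeneous d p)
    rw [← comp_extract φ hφ, hfg, map_zero]
  simp [this]

/-- The block-diagonal matrices (w.r.t. the weight function) form a subalgebra. -/
def blockSub (K : Type*) [Field K] (N : ℕ) (w : Fin N → ℕ) :
    Subalgebra K (Matrix (Fin N) (Fin N) K) where
  carrier := {m | ∀ t s, w t ≠ w s → m t s = 0}
  add_mem' := by intro x y hx hy t s h; simp [Matrix.add_apply, hx t s h, hy t s h]
  mul_mem' := by
    intro x y hx hy t s h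
    rw [Matrix.mul_apply]
    apply Finset.sum_eq_zero
    intro u _
    by_cases hu : w t = w u
    · rw [hy u s (hu ▸ h), mul_zero]
    · rw [hx t u hu, zero_mul]
  algebraMap_mem' := by
    intro c t s h
    have hts : t ≠ s := fun he => h (he ▸ rfl)
    simp [Matrix.algebraMap_matrix_apply, hts]

set_option synthInstance.maxHeartbeats 400000 in
lemma inv_block {a : Matrix (Fin N) (Fin N) K} (ha : IsUnit a)
    (hblk : ∀ t s, w t ≠ w s → a t s = 0) :
    ∀ t s, w t ≠ w s → a⁻¹ t s = 0 := by
  classical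
  set S := blockSub K N w
  haveI : FiniteDimensional K S := FiniteDimensional.finiteDimensional_subalgebra S
  let A : S := ⟨a, hblk⟩
  let L : S →ₗ[K] S := LinearMap.mulLeft K A
  have hinj : Function.Injective L := by
    intro x y hxy
    apply Subtype.ext
    have : a * (x : Matrix (Fin N) (Fin N) K) = a * y := congrArg Subtype.val hxy
    exact ha.mul_left_cancel this
  have hsurj := (LinearMap.injective_iff_surjective).mp hinj
  obtain ⟨y, hy⟩ := hsurj 1
  have hy' : a * (y : Matrix (Fin N) (Fin N) K) = 1 := congrArg Subtype.val hy
  have : a⁻¹ = (y : Matrix (Fin N) (Fin N) K) := Matrix.inv_eq_right_inv hy'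
  rw [this]
  exact y.2

section Forward

variable (hpos : ∀ k, 0 < w k)
variable {a : Matrix (Fin N) (Fin N) K} {ψ : Fin N → MvPolynomial (Fin N) K}

lemma lin_homog (hblk : ∀ t s, w t ≠ w s → a t s = 0) (t : Fin N) :
    (∑ s, C (a t s) * X s : MvPolynomial (Fin N) K).IsWeightedHomogeneous w (w t) := by
  apply IsWeightedHomogeneous.sum
  intro s _
  by_cases h : w t = w s
  · have := (isWeightedHomogeneous_C w (a t s)).mul (isWeightedHomogeneous_X K w s)
    rwa [zero_add, ← h] at this
  · rw [hblk t s h, C_0, zero_mul]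
    exact isWeightedHomogeneous_zero K w _

lemma gen_homog (hblk : ∀ t s, w t ≠ w s → a t s = 0)
    (hψ : ∀ t, (ψ t).IsWeightedHomogeneous w (w t)) (t : Fin N) :
    ((∑ s, C (a t s) * X s) + ψ t : MvPolynomial (Fin N) K).IsWeightedHomogeneous w (w t) :=
  (lin_homog hblk t).add (hψ t)

lemma F_surj (ha : IsUnit a) (hblk : ∀ t s, w t ≠ w s → a t s = 0)
    (hψ : ∀ t, ψ t ∈ MvPolynomial.supported K {s : Fin N | w s < w t}) :
    Function.Surjective (aeval (R := K) (fun t => (∑ s, C (a t s) * X s) + ψ t)) := by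
  classical
  set F := aeval (R := K) (fun t => (∑ s, C (a t s) * X s) + ψ t) with hF
  have hdet : IsUnit a.det := (Matrix.isUnit_iff_isUnit_det a).mp ha
  set b := a⁻¹ with hb
  have hba : b * a = 1 := Matrix.nonsing_inv_mul a hdet
  have hbblk : ∀ t s, w t ≠ w s → b t s = 0 := inv_block ha hblk
  -- main induction: every variable is in the range
  have main : ∀ q : ℕ, ∀ t : Fin N, w t = q → X t ∈ F.range := by
    intro q
    induction q using Nat.strong_induction_on with
    | _ q IH =>
      intro t ht
      -- all small variables are in the range, hence all ψ u with w u = q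
      have hψrange : ∀ u : Fin N, w u = q → ψ u ∈ F.range := by
        intro u hu
        have h1 : ψ u ∈ Algebra.adjoin K (X '' {s : Fin N | w s < w u}) := by
          rw [← MvPolynomial.supported_eq_adjoin_X]
          exact hψ u
        refine Algebra.adjoin_le ?_ h1
        rintro - ⟨s, hs, rfl⟩
        exact IH (w s) (hu ▸ hs) s rfl
      have hyrange : ∀ u : Fin N, w u = q →
          (∑ s, C (a u s) * X s : MvPolynomial (Fin N) K) ∈ F.range := by
        intro u hu
        have hFX : F (X u) = (∑ s, C (a u s) * X s) + ψ u := by rw [hF]; simp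
        have : (∑ s, C (a u s) * X s : MvPolynomial (Fin N) K) = F (X u) - ψ u := by
          rw [hFX]; ring
        rw [this]
        exact sub_mem ⟨X u, rfl⟩ (hψrange u hu)
      -- invert the linear system
      have hXt : (X t : MvPolynomial (Fin N) K)
          = ∑ u, C (b t u) * (∑ s, C (a u s) * X s) := by
        have : ∀ u, (C (b t u) * (∑ s, C (a u s) * X s) : MvPolynomial (Fin N) K)
            = ∑ s, C (b t u * a u s) * X s := by
          intro u
          rw [Finset.mul_sum]
          congr 1; ext s; rw [← mul_assoc, ← C_mul]
        rw [Finset.sum_congr rfl fun u _ => this u, Finset.sum_comm]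
        have : ∀ s, (∑ u, C (b t u * a u s) * X s : MvPolynomial (Fin N) K)
            = C ((b * a) t s) * X s := by
          intro s
          rw [← Finset.sum_mul, ← map_sum, Matrix.mul_apply]
        rw [Finset.sum_congr rfl fun s _ => this s, hba]
        rw [Finset.sum_eq_single t]
        · simp
        · intro s _ hs; rw [Matrix.one_apply_ne' hs]; simp
        · intro h; exact absurd (Finset.mem_univ t) h
      rw [hXt]
      apply Subalgebra.sum_mem
      intro u _
      by_cases hu : w u = q
      · exact Subalgebra.mul_mem _ (Subalgebra.algebraMap_mem _ _) (hyrange u hu)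
      · rw [hbblk t u (by rw [ht]; exact fun h => hu h.symm), C_0, zero_mul]
        exact Subalgebra.zero_mem _
  rw [← AlgHom.range_eq_top]
  rw [← top_le_iff, ← MvPolynomial.adjoin_range_X]
  apply Algebra.adjoin_le
  rintro - ⟨t, rfl⟩
  exact main (w t) t rfl

end Forward

section Converse

lemma coeff_single_linear (c : Fin N → K) (u : Fin N) :
    coeff (Finsupp.single u 1) (∑ s, C (c s) * X s : MvPolynomial (Fin N) K) = c u := by
  classical
  rw [coeff_sum]
  rw [Finset.sum_eq_single u]
  · rw [coeff_C_mul, coeff_X, if_pos rfl, mul_one]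
  · intro s _ hs
    rw [coeff_C_mul, coeff_X', if_neg, mul_zero]
    exact fun h => hs (by
      have := Finsupp.single_left_injective (α := Fin N) (one_ne_zero (α := ℕ)) h
      exact this)
  · intro h; exact absurd (Finset.mem_univ u) h

/-- inverse of a graded automorphism is graded -/
lemma symm_graded (φ : MvPolynomial (Fin N) K ≃ₐ[K] MvPolynomial (Fin N) K)
    (hφ : ∀ (d : ℕ) (f : MvPolynomial (Fin N) K),
      f.IsWeightedHomogeneous w d → (φ f).IsWeightedHomogeneous w d)
    (d : ℕ) (f : MvPolynomial (Fin N) K) (hf : f.IsWeightedHomogeneous w d) :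
    (φ.symm f).IsWeightedHomogeneous w d := by
  classical
  set g := φ.symm f with hg
  have hfg : φ g = f := φ.apply_symm_apply f
  have hcomp : ∀ m : ℕ, m ≠ d → weightedHomogeneousComponent w m g = 0 := by
    intro m hm
    have h1 : φ (weightedHomogeneousComponent w m g) =
        weightedHomogeneousComponent w m (φ g) :=
      (comp_extract φ.toAlgHom hφ g m).symm
    rw [hfg] at h1
    have h2 : weightedHomogeneousComponent w m f = 0 :=
      hf.weightedHomogeneousComponent_ne m hm
    rw [h2] at h1
    exact φ.injective (by rw [h1, map_zero])
  have : g = weightedHomogeneousComponent w d g := by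
    conv_lhs => rw [← finsum_weightedHomogeneousComponent w (φ := g)]
    exact finsum_eq_single _ d hcomp
  rw [this]
  exact weightedHomogeneousComponent_isWeightedHomogeneous d g

lemma add_eq_single_cases {i j : Fin N →₀ ℕ} {u : Fin N}
    (h : i + j = Finsupp.single u 1) : i = 0 ∨ j = 0 := by
  classical
  by_contra hc
  push_neg at hc
  obtain ⟨hi, hj⟩ := hc
  obtain ⟨v, hv⟩ := Finsupp.ne_iff.mp hi
  obtain ⟨v', hv'⟩ := Finsupp.ne_iff.mp hj
  simp only [Finsupp.coe_zero, Pi.zero_apply] at hv hv'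
  have hval : ∀ x, i x + j x = Finsupp.single u 1 x := fun x => by
    rw [← Finsupp.add_apply, h]
  have hvu : v = u := by
    by_contra hne
    have := hval v
    rw [Finsupp.single_apply, if_neg (fun h => hne h.symm)] at this
    omega
  have hvu' : v' = u := by
    by_contra hne
    have := hval v'
    rw [Finsupp.single_apply, if_neg (fun h => hne h.symm)] at this
    omega
  have := hval u
  rw [Finsupp.single_apply, if_pos rfl] at this
  subst hvu; subst hvu'
  omega

lemma coeff_single_mul_eq_zero {p q : MvPolynomial (Fin N) K}
    (hp : coeff 0 p = 0) (hq : coeff 0 q = 0) (u : Fin N) :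
    coeff (Finsupp.single u 1) (p * q) = 0 := by
  classical
  rw [coeff_mul]
  apply Finset.sum_eq_zero
  rintro ⟨i, j⟩ hij
  rw [Finset.HasAntidiagonal.mem_antidiagonal] at hij
  rcases add_eq_single_cases hij with h | h
  · subst h; rw [hp, zero_mul]
  · subst h; rw [hq, mul_zero]

end Converse

section Converse2

lemma monomial_factor {e : Fin N →₀ ℕ} {v : Fin N} (hv : e v ≠ 0) (c : K) :
    (monomial e c : MvPolynomial (Fin N) K)
      = X v * monomial (e - Finsupp.single v 1) c := by
  classical
  have hle : Finsupp.single v 1 ≤ e := by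
    rw [Finsupp.single_le_iff]
    omega
  rw [X, monomial_mul, one_mul]
  congr 1
  rw [add_tsub_cancel_of_le hle]

lemma constCoeff_image_monomial (χ : MvPolynomial (Fin N) K →ₐ[K] MvPolynomial (Fin N) K)
    (hχ : ∀ s, coeff 0 (χ (X s)) = 0) {e : Fin N →₀ ℕ} (he : e ≠ 0) (c : K) :
    coeff 0 (χ (monomial e c)) = 0 := by
  classical
  obtain ⟨v, hv⟩ := Finsupp.ne_iff.mp he
  simp only [Finsupp.coe_zero, Pi.zero_apply] at hv
  rw [monomial_factor hv c, map_mul, ← constantCoeff_eq, map_mul, constantCoeff_eq, hχ v, zero_mul]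

lemma linCoeff_image_monomial (χ : MvPolynomial (Fin N) K →ₐ[K] MvPolynomial (Fin N) K)
    (hχ : ∀ s, coeff 0 (χ (X s)) = 0) {e : Fin N →₀ ℕ} (he : e ≠ 0)
    (he2 : ∀ v, e ≠ Finsupp.single v 1) (c : K) (u : Fin N) :
    coeff (Finsupp.single u 1) (χ (monomial e c)) = 0 := by
  classical
  obtain ⟨v, hv⟩ := Finsupp.ne_iff.mp he
  simp only [Finsupp.coe_zero, Pi.zero_apply] at hv
  have he' : e - Finsupp.single v 1 ≠ 0 := by
    intro h0
    apply he2 v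
    have hle : Finsupp.single v 1 ≤ e := by rw [Finsupp.single_le_iff]; omega
    have := add_tsub_cancel_of_le hle
    rw [h0, add_zero] at this
    exact this.symm
  rw [monomial_factor hv c, map_mul]
  exact coeff_single_mul_eq_zero (hχ v) (constCoeff_image_monomial χ hχ he' c) u

/-- if `p` has zero constant and linear coefficients, so does `χ p` for `χ` an algebra
endomorphism killing constant terms of variables. -/
lemma linCoeff_image (χ : MvPolynomial (Fin N) K →ₐ[K] MvPolynomial (Fin N) K)
    (hχ : ∀ s, coeff 0 (χ (X s)) = 0) {p : MvPolynomial (Fin N) K}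
    (hp0 : coeff 0 p = 0) (hp1 : ∀ v, coeff (Finsupp.single v 1) p = 0) (u : Fin N) :
    coeff (Finsupp.single u 1) (χ p) = 0 := by
  classical
  conv_lhs => rw [p.as_sum, map_sum]
  rw [coeff_sum]
  apply Finset.sum_eq_zero
  intro e he
  have hce : coeff e p ≠ 0 := Finsupp.mem_support_iff.mp he
  have he0 : e ≠ 0 := fun h => hce (h ▸ hp0)
  have he2 : ∀ v, e ≠ Finsupp.single v 1 := fun v h => hce (h ▸ hp1 v)
  exact linCoeff_image_monomial χ hχ he0 he2 _ u

end Converse2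


end Aux

/-- **Graded automorphisms of a weighted polynomial ring.**
Let `K` be an infinite field of characteristic `0` and `R = K[X_1,…,X_N]` the polynomial
ring with positive weights `w 1 ≤ w 2 ≤ … ≤ w N` (variables listed by increasing weight;
variables of equal weight form the groups `𝐗_i` of the paper).  An assignment
`φ(X_t) = ∑_s a t s • X_s + ψ t`, where `a` is an invertible matrix whose entries vanish
between different weights (i.e. a block-diagonal matrix, one invertible block `A_i` for each
weight `q_i`), and where `ψ t` is a weighted homogeneous polynomial of degree `w t` in the
variables of strictly smaller weight, defines a graded `K`-algebra automorphism of `R`;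
conversely every graded `K`-algebra automorphism of `R` is of this form. -/
theorem graded_automorphisms_of_weighted_polynomial_ring
    (K : Type*) [Field K] [CharZero K]
    (N : ℕ) (w : Fin N → ℕ) (hpos : ∀ k, 0 < w k) (hmono : Monotone w) :
    -- any such assignment defines a graded automorphism
    (∀ (a : Matrix (Fin N) (Fin N) K) (ψ : Fin N → MvPolynomial (Fin N) K),
      IsUnit a →
      (∀ t s, w t ≠ w s → a t s = 0) →
      (∀ t, (ψ t).IsWeightedHomogeneous w (w t) ∧
        ψ t ∈ MvPolynomial.supported K {s : Fin N | w s < w t}) →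
      ∃ φ : MvPolynomial (Fin N) K ≃ₐ[K] MvPolynomial (Fin N) K,
        (∀ (d : ℕ) (f : MvPolynomial (Fin N) K),
            f.IsWeightedHomogeneous w d → (φ f).IsWeightedHomogeneous w d) ∧
        (∀ t, φ (X t) = (∑ s, C (a t s) * X s) + ψ t))
    ∧
    -- conversely, any graded automorphism is of this kind
    (∀ φ : MvPolynomial (Fin N) K ≃ₐ[K] MvPolynomial (Fin N) K,
      (∀ (d : ℕ) (f : MvPolynomial (Fin N) K),
          f.IsWeightedHomogeneous w d → (φ f).IsWeightedHomogeneous w d) →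
      ∃ (a : Matrix (Fin N) (Fin N) K) (ψ : Fin N → MvPolynomial (Fin N) K),
        IsUnit a ∧
        (∀ t s, w t ≠ w s → a t s = 0) ∧
        (∀ t, (ψ t).IsWeightedHomogeneous w (w t) ∧
          ψ t ∈ MvPolynomial.supported K {s : Fin N | w s < w t}) ∧
        (∀ t, φ (X t) = (∑ s, C (a t s) * X s) + ψ t)) := by
  classical
  constructor
  · -- forward direction
    intro a ψ ha hblk hψ
    set F : MvPolynomial (Fin N) K →ₐ[K] MvPolynomial (Fin N) K :=
      aeval (R := K) (fun t => (∑ s, C (a t s) * X s) + ψ t) with hFdef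
    have hgen : ∀ t, ((∑ s, C (a t s) * X s) + ψ t : MvPolynomial (Fin N) K).IsWeightedHomogeneous
        w (w t) := gen_homog hblk (fun t => (hψ t).1)
    have hgrade : ∀ (d : ℕ) (f : MvPolynomial (Fin N) K),
        f.IsWeightedHomogeneous w d → (F f).IsWeightedHomogeneous w d :=
      fun d f hf => aeval_homog _ hgen hf
    have hsurj : Function.Surjective F := F_surj ha hblk (fun t => (hψ t).2)
    have hinj : Function.Injective F := inj_of_surj hpos F hgrade hsurj
    refine ⟨AlgEquiv.ofBijective F ⟨hinj, hsurj⟩, ?_, ?_⟩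
    · intro d f hf
      exact hgrade d f hf
    · intro t
      show F (X t) = _
      rw [hFdef]
      simp
  · -- converse direction
    intro φ hφ
    set a : Matrix (Fin N) (Fin N) K :=
      fun t s => coeff (Finsupp.single s 1) (φ (X t)) with hadef
    set ψ : Fin N → MvPolynomial (Fin N) K :=
      fun t => φ (X t) - ∑ s, C (a t s) * X s with hψdef
    haveI : Finsupp.NonTorsionWeight ℕ w :=
      Finsupp.nonTorsionWeight_of ℕ (w := w) (fun s => (hpos s).ne')
    have hXhom : ∀ t, (φ (X t)).IsWeightedHomogeneous w (w t) :=
      fun t => hφ (w t) (X t) (isWeightedHomogeneous_X K w t)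
    have hblk : ∀ t s, w t ≠ w s → a t s = 0 := by
      intro t s h
      exact (hXhom t).coeff_eq_zero _ (by rw [weight_single_one]; exact fun hh => h hh.symm)
    have hψhom : ∀ t, (ψ t).IsWeightedHomogeneous w (w t) := by
      intro t
      rw [hψdef]
      have h2 := lin_homog (w := w) hblk t
      rw [← mem_weightedHomogeneousSubmodule] at *
      exact Submodule.sub_mem _ (hXhom t) h2
    -- linear & constant coefficients of ψ vanish
    have hψlin : ∀ t v, coeff (Finsupp.single v 1) (ψ t) = 0 := by
      intro t v
      rw [hψdef]
      simp only [coeff_sub, coeff_single_linear]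
      rw [hadef]
      ring
    have hψconst : ∀ t, coeff 0 (ψ t) = 0 := by
      intro t
      have := (hψhom t).coeff_eq_zero (d := 0) (by
        rw [map_zero]; exact (hpos t).ne)
      exact this
    -- ψ is supported on smaller-weight variables
    have hψsupp : ∀ t, ψ t ∈ MvPolynomial.supported K {s : Fin N | w s < w t} := by
      intro t
      rw [MvPolynomial.mem_supported]
      intro v hv
      rw [Finset.mem_coe, mem_vars] at hv
      obtain ⟨e, he, hve⟩ := hv
      have hce : coeff e (ψ t) ≠ 0 := Finsupp.mem_support_iff.mp he
      have hwe : Finsupp.weight w e = w t := hψhom t hce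
      have hev : e v ≠ 0 := Finsupp.mem_support_iff.mp hve
      have hle : w v ≤ w t := hwe ▸ Finsupp.le_weight_of_ne_zero' w hev
      rcases lt_or_eq_of_le hle with h | h
      · exact h
      · exfalso
        -- then e = single v 1 and the coefficient vanishes
        have hsle : Finsupp.single v 1 ≤ e := by rw [Finsupp.single_le_iff]; omega
        have hdec : e = Finsupp.single v 1 + (e - Finsupp.single v 1) :=
          (add_tsub_cancel_of_le hsle).symm
        have hw0 : Finsupp.weight w (e - Finsupp.single v 1) = 0 := by
          have : Finsupp.weight w e =
              Finsupp.weight w (Finsupp.single v 1) +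
              Finsupp.weight w (e - Finsupp.single v 1) := by
            rw [← map_add, ← hdec]
          rw [hwe, weight_single_one, h] at this
          omega
        have he0 : e - Finsupp.single v 1 = 0 :=
          (Finsupp.weight_eq_zero_iff_eq_zero w).mp hw0
        rw [he0, add_zero] at hdec
        rw [hdec] at hce
        exact hce (hψlin t v)
    -- the matrix is invertible
    have hφX : ∀ t, φ (X t) = (∑ s, C (a t s) * X s) + ψ t := by
      intro t; rw [hψdef]; ring
    have hsymm : ∀ (d : ℕ) (f : MvPolynomial (Fin N) K),
        f.IsWeightedHomogeneous w d → (φ.symm f).IsWeightedHomogeneous w d :=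
      symm_graded φ hφ
    set b : Matrix (Fin N) (Fin N) K :=
      fun t s => coeff (Finsupp.single s 1) (φ.symm (X t)) with hbdef
    have hχ0 : ∀ s, coeff 0 (φ.symm (X s) : MvPolynomial (Fin N) K) = 0 := by
      intro s
      exact (hsymm (w s) (X s) (isWeightedHomogeneous_X K w s)).coeff_eq_zero _
        (by rw [map_zero]; exact (hpos s).ne)
    have hab : a * b = 1 := by
      ext t u
      have key : (X t : MvPolynomial (Fin N) K)
          = (∑ s, C (a t s) * φ.symm (X s)) + φ.symm (ψ t) := by
        conv_lhs => rw [← φ.symm_apply_apply (X t), hφX t]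
        rw [map_add, map_sum]
        congr 1
        refine Finset.sum_congr rfl fun s _ => ?_
        rw [map_mul]
        congr 1
        rw [← algebraMap_eq]
        exact φ.symm.commutes _
      have h1 := congrArg (coeff (Finsupp.single u 1)) key
      rw [coeff_add, coeff_sum] at h1
      have h2 : coeff (Finsupp.single u 1) (φ.symm (ψ t)) = 0 :=
        linCoeff_image φ.symm.toAlgHom hχ0 (hψconst t) (hψlin t) u
      rw [h2, add_zero] at h1
      have h3 : ∀ s, coeff (Finsupp.single u 1) (C (a t s) * φ.symm (X s))
          = a t s * b s u := fun s => by rw [coeff_C_mul, hbdef]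
      rw [Finset.sum_congr rfl fun s _ => h3 s] at h1
      rw [Matrix.mul_apply, ← h1, Matrix.one_apply, coeff_X']
      by_cases h : t = u
      · subst h; simp
      · rw [if_neg (fun hh => h (Finsupp.single_left_injective one_ne_zero hh)), if_neg h]
    exact ⟨a, ψ, (Matrix.isUnit_iff_isUnit_det a).mpr (Matrix.isUnit_det_of_right_inverse hab), hblk,
      fun t => ⟨hψhom t, hψsupp t⟩, hφX⟩
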